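/- Let A and B = A + h be proximinal parallel subsets of a Banach space X with ‖h‖ = dist(A,B) = d, and let T be a cyclic contraction on A∪B with constant k ∈ (0,1). Then the map T' : B → B defined by T'(b) = Tb + h is a contraction with constant k for the semimetric d₁, i.e., d₁(T'x, T'y) ≤ k·d₁(x,y) for all x,y ∈ B, where d₁(x,y) = inf{r > 0 : ‖y−(x−h)‖ ≤ d+r and ‖y−(x+h)‖ ≤ d+r}. -/

import Mathlib

open Filter Metric

/-- The distance between two sets: `inf {d(x,y) : x ∈ A, y ∈ B}`. -/
noncomputable def setDist {X : Type*} [PseudoMetricSpace X] (A B : Set X) : ℝ :=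
  sInf (Set.image2 dist A B)

/-- `(A,B)` is a sharp proximinal pair. -/
def SharpProximinalPair {X : Type*} [NormedAddCommGroup X] (A B : Set X) : Prop :=
  ∀ x ∈ A, ∀ y ∈ B, ∃! p : X × X,
    p.1 ∈ A ∧ p.2 ∈ B ∧ dist x p.2 = setDist A B ∧ dist p.1 y = setDist A B

/-- `A` and `B` are proximinal parallel sets, with `B = A + h` and `‖h‖ = dist(A,B)`. -/
def ProximinalParallel {X : Type*} [NormedAddCommGroup X] (A B : Set X) (h : X) : Prop :=
  SharpProximinalPair A B ∧ B = (fun a => a + h) '' A ∧ ‖h‖ = setDist A B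

/-- The semimetric `d₁(x,y) = inf {r > 0 : ‖y - (x - h)‖ ≤ d + r and ‖y - (x + h)‖ ≤ d + r}`. -/
noncomputable def semiD1 {X : Type*} [NormedAddCommGroup X] (h : X) (d : ℝ) (x y : X) : ℝ :=
  sInf {r : ℝ | 0 < r ∧ ‖y - (x - h)‖ ≤ d + r ∧ ‖y - (x + h)‖ ≤ d + r}

theorem translated_map_is_d1_contraction {X : Type*} [NormedAddCommGroup X]
    [NormedSpace ℝ X] [CompleteSpace X]
    (A B : Set X) (hA : A.Nonempty) (hB : B.Nonempty) (h : X)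
    (hpar : ProximinalParallel A B h)
    (d : ℝ) (hd : d = setDist A B)
    (T : X → X) (k : ℝ) (hk0 : 0 < k) (hk1 : k < 1)
    (hTA : Set.MapsTo T A B) (hTB : Set.MapsTo T B A)
    (hTcontr : ∀ x ∈ A, ∀ y ∈ B, dist (T x) (T y) ≤ k * dist x y + (1 - k) * setDist A B) :
    Set.MapsTo (fun b => T b + h) B B ∧
      ∀ x ∈ B, ∀ y ∈ B, semiD1 h d (T x + h) (T y + h) ≤ k * semiD1 h d x y := by
  obtain ⟨hsharp, hBA, hnorm⟩ := hpar
  have hdn : d = ‖h‖ := by rw [hd, ← hnorm]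
  have hd0 : 0 ≤ d := hdn ▸ norm_nonneg h
  -- membership transfer
  have hAB : ∀ a ∈ A, a + h ∈ B := by
    intro a ha; rw [hBA]; exact ⟨a, ha, rfl⟩
  have hBsub : ∀ b ∈ B, b - h ∈ A := by
    intro b hb; rw [hBA] at hb; obtain ⟨a, ha, rfl⟩ := hb; simpa using ha
  -- lower bound for dist
  have hlow : ∀ u ∈ A, ∀ v ∈ B, d ≤ dist u v := by
    intro u hu v hv
    rw [hd, setDist]
    refine csInf_le ⟨0, ?_⟩ ⟨u, hu, v, hv, rfl⟩
    rintro z ⟨a, _, b, _, rfl⟩; exact dist_nonneg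
  -- key lemma: T (a + h) = T a - h for a ∈ A
  have hkey : ∀ a ∈ A, T (a + h) = T a - h := by
    intro a ha
    have hah : a + h ∈ B := hAB a ha
    have hTa : T a ∈ B := hTA ha
    have hTah : T (a + h) ∈ A := hTB hah
    have hdistd : dist (T (a + h)) (T a) = d := by
      refine le_antisymm ?_ (hlow _ hTah _ hTa)
      have := hTcontr a ha (a + h) hah
      rw [← hd] at this
      have h1 : dist a (a + h) = ‖h‖ := by
        rw [dist_eq_norm]; simp [norm_neg]
      rw [dist_comm (T a)] at this
      calc dist (T (a + h)) (T a) ≤ k * dist a (a + h) + (1 - k) * d := this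
        _ = d := by rw [h1, ← hdn]; ring
    obtain ⟨p, _, hpuniq⟩ := hsharp (T (a + h)) hTah (T a) hTa
    have e1 : (⟨T (a + h), T a⟩ : X × X) = p := by
      refine hpuniq _ ⟨hTah, hTa, ?_, ?_⟩ <;>
        simpa [hd, dist_comm] using hdistd
    have e2 : (⟨T a - h, T (a + h) + h⟩ : X × X) = p := by
      refine hpuniq _ ⟨?_, hAB _ hTah, ?_, ?_⟩
      · simpa using hBsub _ hTa
      · rw [← hd, dist_eq_norm, hdn]; simp [norm_neg]
      · rw [← hd, dist_eq_norm, hdn]; simp [norm_neg]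
    have := e1.trans e2.symm
    exact (Prod.mk.injEq _ _ _ _ ▸ this).1
  constructor
  · intro b hb
    exact hAB _ (hTB hb)
  · intro x hx y hy
    -- T (x - h) = T x + h
    have hTsub : ∀ b ∈ B, T (b - h) = T b + h := by
      intro b hb
      have := hkey (b - h) (hBsub b hb)
      rw [sub_add_cancel] at this
      rw [this]; abel
    set S : Set ℝ := {r : ℝ | 0 < r ∧ ‖y - (x - h)‖ ≤ d + r ∧ ‖y - (x + h)‖ ≤ d + r} with hS
    have hSne : S.Nonempty := by
      refine ⟨‖y - (x - h)‖ + ‖y - (x + h)‖ + 1, ?_, ?_, ?_⟩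
      · positivity
      · nlinarith [norm_nonneg (y - (x + h)), norm_nonneg (y - (x - h))]
      · nlinarith [norm_nonneg (y - (x + h)), norm_nonneg (y - (x - h))]
    -- for each r ∈ S, k*r belongs to the target set
    have hmain : ∀ r ∈ S, semiD1 h d (T x + h) (T y + h) ≤ k * r := by
      intro r ⟨hr0, hr1, hr2⟩
      have hxA : x - h ∈ A := hBsub x hx
      have hyA : y - h ∈ A := hBsub y hy
      -- ‖T y - T x - h‖ ≤ d + k r
      have c1 : ‖(T y + h) - ((T x + h) + h)‖ ≤ d + k * r := by
        have := hTcontr (x - h) hxA y hy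
        rw [← hd, hTsub x hx, dist_eq_norm, dist_eq_norm] at this
        have hn : ‖x - h - y‖ ≤ d + r := by
          rw [← norm_neg]; convert hr1 using 2 <;> first | rfl | abel
        have heq : ‖(T y + h) - ((T x + h) + h)‖ = ‖T x + h - T y‖ := by
          rw [← norm_neg]; congr 1; abel
        rw [heq]
        calc ‖T x + h - T y‖ ≤ k * ‖x - h - y‖ + (1 - k) * d := this
          _ ≤ k * (d + r) + (1 - k) * d := by nlinarith
          _ = d + k * r := by ring
      -- ‖T y - T x + h‖ ≤ d + k r
      have c2 : ‖(T y + h) - ((T x + h) - h)‖ ≤ d + k * r := by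
        have := hTcontr (y - h) hyA x hx
        rw [← hd, hTsub y hy, dist_eq_norm, dist_eq_norm] at this
        have hn : ‖y - h - x‖ ≤ d + r := by
          convert hr2 using 2; abel
        have heq : ‖(T y + h) - ((T x + h) - h)‖ = ‖T y + h - T x‖ := by
          congr 1; abel
        rw [heq]
        calc ‖T y + h - T x‖ ≤ k * ‖y - h - x‖ + (1 - k) * d := this
          _ ≤ k * (d + r) + (1 - k) * d := by nlinarith
          _ = d + k * r := by ring
      refine csInf_le ⟨0, ?_⟩ ⟨by positivity, c2, c1⟩
      rintro z ⟨hz, _⟩; exact hz.le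
    -- conclude
    have hSbdd : BddBelow S := ⟨0, fun z hz => hz.1.le⟩
    have hdiv : semiD1 h d (T x + h) (T y + h) / k ≤ sInf S := by
      refine le_csInf hSne fun r hr => ?_
      rw [div_le_iff₀ hk0]
      exact (hmain r hr).trans_eq (mul_comm k r)
    have : semiD1 h d x y = sInf S := rfl
    rw [this]
    calc semiD1 h d (T x + h) (T y + h)
        = (semiD1 h d (T x + h) (T y + h) / k) * k := by field_simp
      _ ≤ sInf S * k := by
          apply mul_le_mul_of_nonneg_right hdiv hk0.le
      _ = k * sInf S := mul_comm _ _
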